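/- arXiv:2404.09224 — 2 statements merged into one kernel-verified Lean document; each statement's English description precedes it below -/
import Mathlib

section
/- Let A be a semiprime unital ring and L ⊆ A a left ideal. Then L is Fredholm if and only if L = Lan(Ran(L)) and Ran(L) has finite length as a right A-module. -/
open MulOpposite Submodule

/-- The length of a module: the supremum of lengths of chains of submodules. -/
noncomputable def mlen (R M : Type*) [Ring R] [AddCommGroup M] [Module R M] : ℕ∞ :=
  (Order.krullDim (Submodule R M)).unbotD 0

/-- A ring is semiprime if it has no nonzero nilpotent (two-sided) ideals;
equivalently, `a A a = 0` implies `a = 0`. -/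
def IsSemiprimeRing (A : Type*) [Ring A] : Prop :=
  ∀ a : A, (∀ x : A, a * x * a = 0) → a = 0

/-- The (left) socle of a ring: the sum of all minimal left ideals. -/
noncomputable def socle (A : Type*) [Ring A] : Submodule A A :=
  sSup {m : Submodule A A | IsAtom m}

/-- An element is Fredholm if its image in `A/soc(A)` is invertible. -/
def IsFredholmElem {A : Type*} [Ring A] (a : A) : Prop :=
  ∃ b : A, a * b - 1 ∈ socle A ∧ b * a - 1 ∈ socle A

/-- A left ideal is Fredholm if it contains a Fredholm element. -/
def IsFredholmLeftIdeal {A : Type*} [Ring A] (L : Submodule A A) : Prop :=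
  ∃ a ∈ L, IsFredholmElem a

/-- The right annihilator of a set, as a right ideal (`Aᵐᵒᵖ`-submodule of `A`). -/
def rAnn {A : Type*} [Ring A] (S : Set A) : Submodule Aᵐᵒᵖ A where
  carrier := {a | ∀ s ∈ S, s * a = 0}
  add_mem' := by intro x y hx hy s hs; rw [Set.mem_setOf_eq] at *; rw [mul_add, hx s hs, hy s hs, add_zero]
  zero_mem' := by intro s _; exact mul_zero s
  smul_mem' := by
    intro c x hx s hs
    show s * (c • x) = 0
    rw [MulOpposite.smul_eq_mul_unop, ← mul_assoc, hx s hs, zero_mul]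

/-- The left annihilator of a set, as a left ideal. -/
def lAnn {A : Type*} [Ring A] (S : Set A) : Submodule A A where
  carrier := {a | ∀ s ∈ S, a * s = 0}
  add_mem' := by intro x y hx hy s hs; rw [Set.mem_setOf_eq] at *; rw [add_mul, hx s hs, hy s hs, add_zero]
  zero_mem' := by intro s _; exact zero_mul s
  smul_mem' := by
    intro c x hx s hs
    show c * x * s = 0
    rw [mul_assoc, hx s hs, mul_zero]


set_option linter.unusedSectionVars false

section ChainBound

variable {α : Type*}

/-- chains under `T` have length at most `n`. -/
def ChainsLE [Preorder α] (T : α) (n : ℕ) : Prop :=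
  ∀ (m : ℕ) (f : ℕ → α), (∀ i, i < m → f i < f (i + 1)) → (∀ i, i ≤ m → f i ≤ T) → m ≤ n

lemma chainsLE_mono [Preorder α] {T T' : α} {n : ℕ} (h : T' ≤ T) (hc : ChainsLE T n) :
    ChainsLE T' n := fun m f hst hle => hc m f hst (fun i hi => (hle i hi).trans h)

lemma chainsLE_of_lt [Preorder α] {T T' : α} {n : ℕ} (h : T' < T) (hc : ChainsLE T (n + 1)) :
    ChainsLE T' n := by
  intro m f hst hle
  have := hc (m + 1) (fun i => if i ≤ m then f i else T) ?_ ?_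
  · omega
  · intro i hi
    by_cases h1 : i + 1 ≤ m
    · simp only [if_pos h1, if_pos (by omega : i ≤ m)]
      exact hst i (by omega)
    · have hi' : i = m := by omega
      subst hi'
      simp only [if_pos (le_refl i), if_neg (by omega : ¬ (i + 1 ≤ i))]
      exact lt_of_le_of_lt (hle i le_rfl) h
  · intro i _
    by_cases h1 : i ≤ m
    · simp only [if_pos h1]; exact (hle i h1).trans h.le
    · simp only [if_neg h1]; exact le_rfl

lemma exists_atom_le_of_chainsLE [PartialOrder α] [OrderBot α] :
    ∀ (n : ℕ) (R : α), ChainsLE R n → R ≠ ⊥ → ∃ S, IsAtom S ∧ S ≤ R := by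
  intro n
  induction n with
  | zero =>
    intro R hb hR
    exfalso
    have := hb 1 (fun i => if i = 0 then ⊥ else R) ?_ ?_
    · omega
    · intro i hi
      have : i = 0 := by omega
      simp only [this, if_pos rfl, if_neg (by omega : ¬ (0+1 = 0))]
      exact bot_lt_iff_ne_bot.mpr hR
    · intro i _
      by_cases h : i = 0 <;> simp [h]
  | succ n ih =>
    intro R hb hR
    by_cases hat : IsAtom R
    · exact ⟨R, hat, le_rfl⟩
    · have : ∃ b, b < R ∧ b ≠ ⊥ := by
        by_contra hc
        push_neg at hc
        exact hat ⟨hR, fun b hb' => by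
          by_contra hb0
          exact hb0 (hc b hb')⟩
      obtain ⟨R₁, hR₁R, hR₁⟩ := this
      obtain ⟨S, hS, hSle⟩ := ih R₁ (chainsLE_of_lt hR₁R hb) hR₁
      exact ⟨S, hS, hSle.trans hR₁R.le⟩

variable [Lattice α] [OrderBot α] [IsModularLattice α]

lemma le_foldr_of_mem {l : List α} {a : α} (h : a ∈ l) : a ≤ l.foldr (· ⊔ ·) ⊥ := by
  induction l with
  | nil => simp at h
  | cons b l ih =>
    rcases List.mem_cons.mp h with rfl | h
    · exact le_sup_left
    · exact (ih h).trans le_sup_right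

lemma foldr_le {l : List α} {T : α} (h : ∀ a ∈ l, a ≤ T) : l.foldr (· ⊔ ·) ⊥ ≤ T := by
  induction l with
  | nil => simp
  | cons b l ih =>
    exact sup_le (h b (List.mem_cons_self)) (ih fun a ha => h a (List.mem_cons_of_mem _ ha))

lemma chain_mono {m : ℕ} {f : ℕ → α} (hst : ∀ i, i < m → f i < f (i + 1)) :
    ∀ i j, i ≤ j → j ≤ m → f i ≤ f j := by
  intro i j hij
  induction hij with
  | refl => intro _; exact le_rfl
  | @step k h ih =>
    intro hk
    exact le_trans (ih (by omega)) (hst k (by omega)).le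

lemma chain_bound :
    ∀ (l : List α), (∀ a ∈ l, a = ⊥ ∨ IsAtom a) → ChainsLE (l.foldr (· ⊔ ·) ⊥) l.length := by
  intro l
  induction l with
  | nil =>
    intro _ m f hst hle
    by_contra h
    have h1 : 1 ≤ m := by omega
    have h2 := hst 0 h1
    have h3 : f 1 ≤ ⊥ := hle 1 h1
    exact absurd (lt_of_lt_of_le h2 h3) not_lt_bot
  | cons a l ih =>
    intro hl m f hst hle
    set K := l.foldr (· ⊔ ·) ⊥ with hK
    have ha : a = ⊥ ∨ IsAtom a := hl a (List.mem_cons_self)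
    have hl' : ∀ b ∈ l, b = ⊥ ∨ IsAtom b := fun b hb => hl b (List.mem_cons_of_mem _ hb)
    have hbK := ih hl'
    rcases Nat.eq_zero_or_pos m with hm | hm
    · simp [hm]
    have hleT : ∀ i, i ≤ m → f i ≤ a ⊔ K := hle
    -- interval fact
    have hint : ∀ x : α, K ≤ x → x ≤ a ⊔ K → x = K ∨ x = a ⊔ K := by
      intro x h1 h2
      have h3 : (K ⊔ a) ⊓ x = K ⊔ a ⊓ x := sup_inf_assoc_of_le a h1
      rw [sup_comm K a, inf_eq_right.mpr h2] at h3
      rcases ha with rfl | ha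
      · left; rw [h3]; simp
      · rcases (ha.le_iff.mp inf_le_left) with h4 | h4
        · left; rw [h3, h4, sup_bot_eq]
        · right; rw [h3, h4, sup_comm]
    set g : ℕ → α := fun i => f i ⊓ K with hg
    set u : ℕ → α := fun i => f i ⊔ K with hu
    -- a non-strict g step forces a strict u step
    have hjump : ∀ i, i < m → g i = g (i + 1) → u i < u (i + 1) := by
      intro i hi hgi
      have hfle : f i ≤ f (i + 1) := (hst i hi).le
      have hune : ¬ (u (i+1) ≤ u i) := by
        intro hsup
        exact absurd (eq_of_le_of_inf_le_of_sup_le hfle (le_of_eq hgi.symm) hsup)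
          (ne_of_lt (hst i hi))
      exact lt_of_le_not_ge (sup_le_sup_right hfle K) hune
    -- at most one non-strict step
    have honce : ∀ i j, i < j → j < m → g i = g (i + 1) → g j = g (j + 1) → False := by
      intro i j hij hjm hgi hgj
      have h1 : u i < u (i + 1) := hjump i (by omega) hgi
      have h2 : u j < u (j + 1) := hjump j hjm hgj
      have h3 : u (i+1) ≤ u j :=
        sup_le_sup_right (chain_mono hst (i+1) j (by omega) (by omega)) K
      have hKles : ∀ t, t ≤ m → (u t = K ∨ u t = a ⊔ K) := by
        intro t ht
        exact hint _ le_sup_right (sup_le (hleT t ht) le_sup_right)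
      rcases hKles i (by omega) with hui | hui
      · rcases hKles (i+1) (by omega) with hui1 | hui1
        · rw [hui, hui1] at h1; exact lt_irrefl _ h1
        · -- u (i+1) = a ⊔ K ≤ u j < u (j+1) ≤ a ⊔ K
          have : a ⊔ K ≤ u j := hui1 ▸ h3
          have h4 : u (j+1) ≤ a ⊔ K := sup_le (hleT (j+1) (by omega)) le_sup_right
          exact lt_irrefl _ (lt_of_lt_of_le (lt_of_le_of_lt this h2) h4)
      · have h4 : u (i+1) ≤ a ⊔ K := sup_le (hleT (i+1) (by omega)) le_sup_right
        exact lt_irrefl _ (lt_of_lt_of_le h1 (h4.trans (le_of_eq hui.symm)))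
    by_cases hcase : ∀ i, i < m → g i < g (i + 1)
    · have := hbK m g hcase (fun i _ => inf_le_right)
      simpa using Nat.le_succ_of_le this
    · push_neg at hcase
      obtain ⟨i₀, hi₀m, hi₀⟩ := hcase
      have hgeq : g i₀ = g (i₀ + 1) := by
        have hle' : g i₀ ≤ g (i₀ + 1) := inf_le_inf_right K (hst i₀ hi₀m).le
        by_contra hne
        exact hi₀ (lt_of_le_of_ne hle' hne)
      have hstrict : ∀ j, j < m → j ≠ i₀ → g j < g (j + 1) := by
        intro j hjm hji
        have hle' : g j ≤ g (j + 1) := inf_le_inf_right K (hst j hjm).le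
        by_contra hne
        have hgj : g j = g (j + 1) := by
          by_contra hne2
          exact hne (lt_of_le_of_ne hle' hne2)
        rcases Nat.lt_or_ge j i₀ with h | h
        · exact honce j i₀ h hi₀m hgj hgeq
        · exact honce i₀ j (by omega) hjm hgeq hgj
      set h : ℕ → α := fun i => if i ≤ i₀ then g i else g (i + 1) with hh
      have hmain : m - 1 ≤ l.length := by
        apply hbK (m-1) h
        · intro i hi
          by_cases h1 : i + 1 ≤ i₀
          · simp only [hh, if_pos h1, if_pos (by omega : i ≤ i₀)]
            exact hstrict i (by omega) (by omega)
          · by_cases h2 : i ≤ i₀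
            · have : i = i₀ := by omega
              subst this
              simp only [hh, if_pos h2, if_neg h1]
              rw [hgeq]
              exact hstrict (i+1) (by omega) (by omega)
            · simp only [hh, if_neg h2, if_neg (by omega : ¬ (i + 1 ≤ i₀))]
              exact hstrict (i+1) (by omega) (by omega)
        · intro i _
          by_cases h1 : i ≤ i₀ <;> simp only [hh, if_pos, if_neg, h1] <;> exact inf_le_right
      simp only [List.length_cons]
      omega

end ChainBound

section MLen

variable {R M : Type*} [Ring R] [AddCommGroup M] [Module R M]

lemma mlen_ne_top_of_chainsLE {N : Submodule R M} {n : ℕ} (h : ChainsLE N n) :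
    mlen R ↥N ≠ ⊤ := by
  have hk : Order.krullDim (Submodule R ↥N) ≤ (n : WithBot ℕ∞) := by
    apply iSup_le
    intro p
    have hlen : p.length ≤ n := by
      set F : ℕ → Submodule R ↥N :=
        fun i => p.toFun ⟨min i p.length, Nat.lt_succ_of_le (min_le_right _ _)⟩ with hF
      apply h p.length (fun i => map N.subtype (F i))
      · intro i hi
        have hlt : F i < F (i + 1) := by
          apply p.strictMono
          simp only [Fin.lt_def]
          omega
        exact lt_of_le_of_ne (map_mono hlt.le)
          (fun heq => (ne_of_lt hlt) (map_injective_of_injective (injective_subtype N) heq))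
      · intro i _; exact map_subtype_le N _
    exact_mod_cast hlen
  intro htop
  unfold mlen at htop
  cases hd : Order.krullDim (Submodule R ↥N) with
  | bot => rw [hd] at htop; simp at htop
  | coe c =>
    rw [hd] at htop hk
    rw [WithBot.unbotD_coe] at htop
    subst htop
    have h2 : ((⊤ : ℕ∞) : WithBot ℕ∞) ≤ ((n : ℕ∞) : WithBot ℕ∞) := by exact_mod_cast hk
    rw [WithBot.coe_le_coe] at h2
    exact absurd (top_le_iff.mp h2) (WithTop.natCast_ne_top n)

lemma exists_chainsLE_of_mlen_ne_top {N : Submodule R M} (h : mlen R ↥N ≠ ⊤) :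
    ∃ n, ChainsLE N n := by
  have key : ∀ (m : ℕ) (f : ℕ → Submodule R M), (∀ i, i < m → f i < f (i + 1)) →
      (∀ i, i ≤ m → f i ≤ N) → ((m : ℕ) : WithBot ℕ∞) ≤ Order.krullDim (Submodule R ↥N) := by
    intro m f hst hle
    have hstep : ∀ i : Fin m, comap N.subtype (f i.castSucc) < comap N.subtype (f i.succ) := by
      intro i
      have h1 : f (i : ℕ) < f ((i : ℕ) + 1) := hst i i.isLt
      have hrec : ∀ j : ℕ, j ≤ m → map N.subtype (comap N.subtype (f j)) = f j := by
        intro j hj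
        rw [map_comap_subtype]
        exact inf_eq_right.mpr (hle j hj)
      refine lt_of_le_of_ne (comap_mono ?_) (fun heq => (ne_of_lt h1) ?_)
      · simp only [Fin.coe_castSucc, Fin.val_succ]
        exact h1.le
      · have := congrArg (map N.subtype) heq
        simp only [Fin.coe_castSucc, Fin.val_succ] at this
        rwa [hrec i (by omega), hrec ((i : ℕ) + 1) (by omega)] at this
    set p : LTSeries (Submodule R ↥N) := ⟨m, fun j => comap N.subtype (f j), hstep⟩ with hp
    have := Order.LTSeries.length_le_krullDim p
    simpa [hp] using this
  cases hd : Order.krullDim (Submodule R ↥N) with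
  | bot =>
    refine ⟨0, fun m f hst hle => ?_⟩
    have := key m f hst hle
    rw [hd] at this
    exact absurd this (by simp)
  | coe c =>
    have hc : c ≠ ⊤ := by
      intro h'
      apply h
      unfold mlen
      rw [hd, h']
      rfl
    obtain ⟨n, rfl⟩ := WithTop.ne_top_iff_exists.mp hc
    refine ⟨n, fun m f hst hle => ?_⟩
    have h3 := key m f hst hle
    rw [hd] at h3
    have h3' : ((m : ℕ∞) : WithBot ℕ∞) ≤ ((n : ℕ∞) : WithBot ℕ∞) := by
      exact le_trans (le_of_eq (by simp)) (h3.trans (le_of_eq rfl))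
    have h4 : (m : ℕ∞) ≤ (n : ℕ∞) := WithBot.coe_le_coe.mp h3'
    exact_mod_cast h4

end MLen

section RingLemmas

variable {A : Type*} [Ring A]

/-- Left multiplication by `c` as a map of right modules. -/
def lmulHom (c : A) : A →ₗ[Aᵐᵒᵖ] A where
  toFun x := c * x
  map_add' := mul_add c
  map_smul' m x := by
    simp only [MulOpposite.smul_eq_mul_unop, RingHom.id_apply, mul_assoc]

/-- Right multiplication by `c` as a map of left modules. -/
def rmulHom (c : A) : A →ₗ[A] A where
  toFun x := x * c
  map_add' a b := add_mul a b c
  map_smul' m x := by simp only [smul_eq_mul, RingHom.id_apply, mul_assoc]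

@[simp] lemma lmulHom_apply (c x : A) : lmulHom c x = c * x := rfl
@[simp] lemma rmulHom_apply (c x : A) : rmulHom c x = x * c := rfl

lemma mem_span_left {e x : A} : x ∈ span A {e} ↔ ∃ a, a * e = x := by
  rw [Submodule.mem_span_singleton]
  rfl

lemma mem_span_right {e x : A} : x ∈ span Aᵐᵒᵖ {e} ↔ ∃ b, e * b = x := by
  rw [Submodule.mem_span_singleton]
  constructor
  · rintro ⟨c, rfl⟩
    exact ⟨c.unop, (MulOpposite.smul_eq_mul_unop _ _).symm⟩
  · rintro ⟨b, rfl⟩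
    exact ⟨op b, by rw [MulOpposite.smul_eq_mul_unop, unop_op]⟩

lemma exists_ncn (hA : IsSemiprimeRing A) {a : A} (h : a ≠ 0) : ∃ x, a * x * a ≠ 0 := by
  by_contra hc
  push_neg at hc
  exact h (hA a hc)

/-- image of an atom under a linear map is ⊥ or an atom -/
lemma isAtom_map {R M N : Type*} [Ring R] [AddCommGroup M] [Module R M] [AddCommGroup N]
    [Module R N] (f : M →ₗ[R] N) {p : Submodule R M} (hp : IsAtom p) :
    map f p = ⊥ ∨ IsAtom (map f p) := by
  by_cases hker : p ≤ LinearMap.ker f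
  · left
    rw [eq_bot_iff]
    rintro y ⟨x, hx, rfl⟩
    simpa using hker hx
  · right
    constructor
    · intro hbot
      apply hker
      intro x hx
      have : f x ∈ map f p := ⟨x, hx, rfl⟩
      rw [hbot] at this
      simpa using this
    · intro Q hQ
      by_contra hQ0
      obtain ⟨y, hyQ, hy0⟩ := Submodule.exists_mem_ne_zero_of_ne_bot hQ0
      obtain ⟨x, hxp, rfl⟩ := hQ.le hyQ
      have hx0 : x ≠ 0 := by rintro rfl; simp at hy0
      have hxin : x ∈ Submodule.comap f Q ⊓ p := ⟨hyQ, hxp⟩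
      have hne : Submodule.comap f Q ⊓ p ≠ ⊥ := by
        intro hb
        rw [hb] at hxin
        exact hx0 hxin
      have heq : Submodule.comap f Q ⊓ p = p :=
        (hp.le_iff.mp inf_le_right).resolve_left hne
      have hple : p ≤ Submodule.comap f Q := by
        rw [← heq]; exact inf_le_left
      exact absurd (map_le_iff_le_comap.mpr hple) (not_le_of_gt hQ)

/-- a minimal left ideal of a semiprime ring is generated by an idempotent -/
lemma atom_left_idem (hA : IsSemiprimeRing A) {I : Submodule A A} (hI : IsAtom I) :
    ∃ e : A, e * e = e ∧ e ≠ 0 ∧ I = span A {e} := by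
  -- there are x y ∈ I with y * x ≠ 0
  have hxy : ∃ x ∈ I, ∃ y ∈ I, y * x ≠ 0 := by
    by_contra hc
    push_neg at hc
    apply hI.1
    rw [eq_bot_iff]
    intro x hx
    have : x = 0 := by
      apply hA
      intro c
      have hcx : c * x ∈ I := smul_mem I c hx
      rw [mul_assoc]
      exact hc (c * x) hcx x hx
    rw [this]
    exact zero_mem ⊥
  obtain ⟨x, hxI, y, hyI, hyx⟩ := hxy
  have hx0 : x ≠ 0 := by rintro rfl; simp at hyx
  -- N = I * x = I
  set N : Submodule A A := map (rmulHom x) I with hN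
  have hNle : N ≤ I := by
    rintro _ ⟨z, hz, rfl⟩
    exact smul_mem I z hxI
  have hNne : N ≠ ⊥ := by
    rw [Submodule.ne_bot_iff]
    exact ⟨y * x, ⟨y, hyI, rfl⟩, hyx⟩
  have hNI : N = I := (hI.le_iff.mp hNle).resolve_left hNne
  have hxN : x ∈ N := hNI ▸ hxI
  obtain ⟨e, heI, hex⟩ := hxN
  simp only [rmulHom_apply] at hex
  -- J = I ⊓ ker (· * x) = ⊥
  have hJbot : I ⊓ LinearMap.ker (rmulHom x) = ⊥ := by
    rcases hI.le_iff.mp (inf_le_left : I ⊓ LinearMap.ker (rmulHom x) ≤ I) with h | h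
    · exact h
    · exfalso
      have heJ : e ∈ I ⊓ LinearMap.ker (rmulHom x) := by rw [h]; exact heI
      rw [Submodule.mem_inf] at heJ
      have h2 := heJ.2
      rw [LinearMap.mem_ker, rmulHom_apply, hex] at h2
      exact hx0 h2
  have hee : e * e = e := by
    have h1 : e * e - e ∈ I ⊓ LinearMap.ker (rmulHom x) := by
      rw [Submodule.mem_inf]
      constructor
      · exact sub_mem (smul_mem I e heI) heI
      · rw [LinearMap.mem_ker, rmulHom_apply, sub_mul, mul_assoc, hex, hex, sub_self]
    rw [hJbot] at h1
    exact sub_eq_zero.mp h1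
  have he0 : e ≠ 0 := by
    rintro rfl
    rw [zero_mul] at hex
    exact hx0 hex.symm
  refine ⟨e, hee, he0, ?_⟩
  have h1 : span A {e} ≤ I := by
    rw [Submodule.span_le, Set.singleton_subset_iff]
    exact heI
  have h2 : span A {e} ≠ ⊥ := by
    rw [Submodule.ne_bot_iff]
    exact ⟨e, Submodule.mem_span_singleton_self e, he0⟩
  exact ((hI.le_iff.mp h1).resolve_left h2).symm

lemma mul_mem_right' {S : Submodule Aᵐᵒᵖ A} {x : A} (c : A) (hx : x ∈ S) : x * c ∈ S := by
  have := smul_mem S (op c) hx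
  rwa [MulOpposite.smul_eq_mul_unop, unop_op] at this

/-- a minimal right ideal of a semiprime ring is generated by an idempotent -/
lemma atom_right_idem (hA : IsSemiprimeRing A) {S : Submodule Aᵐᵒᵖ A} (hS : IsAtom S) :
    ∃ f : A, f * f = f ∧ f ≠ 0 ∧ S = span Aᵐᵒᵖ {f} := by
  have hxy : ∃ x ∈ S, ∃ y ∈ S, x * y ≠ 0 := by
    by_contra hc
    push_neg at hc
    apply hS.1
    rw [eq_bot_iff]
    intro x hx
    have : x = 0 := by
      apply hA
      intro c
      exact hc (x * c) (mul_mem_right' c hx) x hx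
    rw [this]
    exact zero_mem ⊥
  obtain ⟨x, hxS, y, hyS, hxy⟩ := hxy
  have hx0 : x ≠ 0 := by rintro rfl; simp at hxy
  set N : Submodule Aᵐᵒᵖ A := map (lmulHom x) S with hN
  have hNle : N ≤ S := by
    rintro _ ⟨z, hz, rfl⟩
    exact mul_mem_right' z hxS
  have hNne : N ≠ ⊥ := by
    rw [Submodule.ne_bot_iff]
    exact ⟨x * y, ⟨y, hyS, rfl⟩, hxy⟩
  have hNS : N = S := (hS.le_iff.mp hNle).resolve_left hNne
  have hxN : x ∈ N := hNS ▸ hxS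
  obtain ⟨f, hfS, hxf⟩ := hxN
  simp only [lmulHom_apply] at hxf
  have hJbot : S ⊓ LinearMap.ker (lmulHom x) = ⊥ := by
    rcases hS.le_iff.mp (inf_le_left : S ⊓ LinearMap.ker (lmulHom x) ≤ S) with h | h
    · exact h
    · exfalso
      have hfJ : f ∈ S ⊓ LinearMap.ker (lmulHom x) := by rw [h]; exact hfS
      rw [Submodule.mem_inf] at hfJ
      have h2 := hfJ.2
      rw [LinearMap.mem_ker, lmulHom_apply, hxf] at h2
      exact hx0 h2
  have hff : f * f = f := by
    have h1 : f * f - f ∈ S ⊓ LinearMap.ker (lmulHom x) := by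
      rw [Submodule.mem_inf]
      constructor
      · exact sub_mem (mul_mem_right' f hfS) hfS
      · rw [LinearMap.mem_ker, lmulHom_apply, mul_sub, ← mul_assoc, hxf, hxf, sub_self]
    rw [hJbot] at h1
    exact sub_eq_zero.mp h1
  have hf0 : f ≠ 0 := by
    rintro rfl
    rw [mul_zero] at hxf
    exact hx0 hxf.symm
  refine ⟨f, hff, hf0, ?_⟩
  have h1 : span Aᵐᵒᵖ {f} ≤ S := by
    rw [Submodule.span_le, Set.singleton_subset_iff]
    exact hfS
  have h2 : span Aᵐᵒᵖ {f} ≠ ⊥ := by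
    rw [Submodule.ne_bot_iff]
    exact ⟨f, Submodule.mem_span_singleton_self f, hf0⟩
  exact ((hS.le_iff.mp h1).resolve_left h2).symm

lemma corner_trick {e w v t : A} (hee : e*e = e) (hew : e*w = w)
    (hv : v*w = e) (ht : t*(e*v*e) = e) : w*(e*v*e) = e := by
  have hu : (e*v*e)*w = e := by
    calc (e*v*e)*w = e*v*(e*w) := by rw [mul_assoc (e*v)]
      _ = e*v*w := by rw [hew]
      _ = e*(v*w) := mul_assoc _ _ _
      _ = e*e := by rw [hv]
      _ = e := hee
  have heu : e*(e*v*e) = e*v*e := by rw [← mul_assoc, ← mul_assoc, hee]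
  have ht' : (e*t*e)*(e*v*e) = e := by
    calc (e*t*e)*(e*v*e) = e*t*(e*(e*v*e)) := by rw [mul_assoc (e*t)]
      _ = e*t*(e*v*e) := by rw [heu]
      _ = e*(t*(e*v*e)) := mul_assoc _ _ _
      _ = e*e := by rw [ht]
      _ = e := hee
  have ht'w : e*t*e = w := by
    have h1 : (e*t*e)*e = e*t*e := by rw [mul_assoc (e*t), hee]
    calc e*t*e = (e*t*e)*e := h1.symm
      _ = (e*t*e)*((e*v*e)*w) := by rw [hu]
      _ = ((e*t*e)*(e*v*e))*w := (mul_assoc _ _ _).symm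
      _ = e*w := by rw [ht']
      _ = w := hew
  rw [← ht'w]
  exact ht'

lemma corner_trick_op {f w v t : A} (hff : f*f = f) (hwf : w*f = w)
    (hv : w*v = f) (ht : (f*v*f)*t = f) : (f*v*f)*w = f := by
  have hop : op f * op v * op f = op (f*v*f) := by
    rw [← op_mul, ← op_mul, mul_assoc f v f]
  have h := corner_trick (A := Aᵐᵒᵖ) (e := op f) (w := op w) (v := op v) (t := op t)
    (by rw [← op_mul, hff]) (by rw [← op_mul, hwf]) (by rw [← op_mul, hv])
    (by rw [hop, ← op_mul, ht])
  rw [hop, ← op_mul] at h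
  exact op_injective h

/-- If `Ae` is a minimal left ideal (e idempotent) then `eA` is a minimal right ideal. -/
lemma isAtom_op_span (hA : IsSemiprimeRing A) {e : A} (hee : e * e = e) (he0 : e ≠ 0)
    (hI : IsAtom (span A {e})) : IsAtom (span Aᵐᵒᵖ {e}) := by
  constructor
  · rw [Submodule.ne_bot_iff]
    exact ⟨e, Submodule.mem_span_singleton_self e, he0⟩
  · intro N hN
    by_contra hN0
    obtain ⟨y, hyN, hy0⟩ := Submodule.exists_mem_ne_zero_of_ne_bot hN0
    obtain ⟨b, hb⟩ := mem_span_right.mp (hN.le hyN)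
    have hey : e * y = y := by rw [← hb, ← mul_assoc, hee]
    obtain ⟨c, hc⟩ := exists_ncn hA hy0
    have hw0 : y * c * e ≠ 0 := by
      intro h0
      apply hc
      calc y * c * y = y * c * (e * b) := by rw [hb]
        _ = y * c * e * b := by rw [← mul_assoc]
        _ = 0 := by rw [h0, zero_mul]
    have hwI : y * c * e ∈ span A {e} := mem_span_left.mpr ⟨y * c, rfl⟩
    have hspanw : span A {y * c * e} = span A {e} := by
      have h1 : span A {y * c * e} ≤ span A {e} := by
        rw [Submodule.span_le, Set.singleton_subset_iff]; exact hwI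
      have h2 : span A {y * c * e} ≠ ⊥ := by
        rw [Submodule.ne_bot_iff]
        exact ⟨_, Submodule.mem_span_singleton_self _, hw0⟩
      exact (hI.le_iff.mp h1).resolve_left h2
    obtain ⟨v, hv⟩ : ∃ v, v * (y * c * e) = e := by
      apply mem_span_left.mp
      rw [hspanw]
      exact Submodule.mem_span_singleton_self e
    have hew : e * (y * c * e) = y * c * e := by
      rw [← mul_assoc, ← mul_assoc, hey]
    have hu : (e * v * e) * (y * c * e) = e := by
      calc (e * v * e) * (y * c * e) = e * v * (e * (y * c * e)) := by rw [mul_assoc (e * v)]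
        _ = e * v * (y * c * e) := by rw [hew]
        _ = e * (v * (y * c * e)) := mul_assoc _ _ _
        _ = e * e := by rw [hv]
        _ = e := hee
    have hu0 : e * v * e ≠ 0 := fun h0 => he0 (by rw [← hu, h0, zero_mul])
    have huI : e * v * e ∈ span A {e} := mem_span_left.mpr ⟨e * v, rfl⟩
    have hspanu : span A {e * v * e} = span A {e} := by
      have h1 : span A {e * v * e} ≤ span A {e} := by
        rw [Submodule.span_le, Set.singleton_subset_iff]; exact huI
      have h2 : span A {e * v * e} ≠ ⊥ := by
        rw [Submodule.ne_bot_iff]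
        exact ⟨_, Submodule.mem_span_singleton_self _, hu0⟩
      exact (hI.le_iff.mp h1).resolve_left h2
    obtain ⟨t, ht⟩ : ∃ t, t * (e * v * e) = e := by
      apply mem_span_left.mp
      rw [hspanu]
      exact Submodule.mem_span_singleton_self e
    have heu : e * (e * v * e) = e * v * e := by
      rw [← mul_assoc, ← mul_assoc, hee]
    have ht' : (e * t * e) * (e * v * e) = e := by
      calc (e * t * e) * (e * v * e) = e * t * (e * (e * v * e)) := by rw [mul_assoc (e * t)]
        _ = e * t * (e * v * e) := by rw [heu]
        _ = e * (t * (e * v * e)) := mul_assoc _ _ _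
        _ = e * e := by rw [ht]
        _ = e := hee
    have ht'w : e * t * e = y * c * e := by
      have h1 : (e * t * e) * e = e * t * e := by rw [mul_assoc (e * t), hee]
      calc e * t * e = (e * t * e) * e := h1.symm
        _ = (e * t * e) * ((e * v * e) * (y * c * e)) := by rw [hu]
        _ = ((e * t * e) * (e * v * e)) * (y * c * e) := (mul_assoc _ _ _).symm
        _ = e * (y * c * e) := by rw [ht']
        _ = y * c * e := hew
    have hwu : (y * c * e) * (e * v * e) = e := by rw [← ht'w]; exact ht'
    have heyA : e ∈ span Aᵐᵒᵖ {y} := by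
      apply mem_span_right.mpr
      refine ⟨c * e * (e * v * e), ?_⟩
      have h2 := hwu
      simp only [← mul_assoc] at h2 ⊢
      exact h2
    have hle : span Aᵐᵒᵖ {e} ≤ N := by
      rw [Submodule.span_le, Set.singleton_subset_iff]
      have hyN' : span Aᵐᵒᵖ {y} ≤ N := by
        rw [Submodule.span_le, Set.singleton_subset_iff]; exact hyN
      exact hyN' heyA
    exact absurd hle (not_le_of_gt hN)

/-- If `fA` is a minimal right ideal (f idempotent) then `Af` is a minimal left ideal. -/
lemma isAtom_span_of_op (hA : IsSemiprimeRing A) {f : A} (hff : f * f = f) (hf0 : f ≠ 0)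
    (hS : IsAtom (span Aᵐᵒᵖ {f})) : IsAtom (span A {f}) := by
  constructor
  · rw [Submodule.ne_bot_iff]
    exact ⟨f, Submodule.mem_span_singleton_self f, hf0⟩
  · intro N hN
    by_contra hN0
    obtain ⟨y, hyN, hy0⟩ := Submodule.exists_mem_ne_zero_of_ne_bot hN0
    obtain ⟨b, hb⟩ := mem_span_left.mp (hN.le hyN)
    have hyf : y * f = y := by rw [← hb, mul_assoc, hff]
    obtain ⟨c, hc⟩ := exists_ncn hA hy0
    have hw0 : f * (c * y) ≠ 0 := by
      intro h0
      apply hc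
      calc y * c * y = b * f * c * y := by rw [hb]
        _ = b * (f * (c * y)) := by rw [mul_assoc, mul_assoc]
        _ = 0 := by rw [h0, mul_zero]
    have hwS : f * (c * y) ∈ span Aᵐᵒᵖ {f} := mem_span_right.mpr ⟨c * y, rfl⟩
    have hspanw : span Aᵐᵒᵖ {f * (c * y)} = span Aᵐᵒᵖ {f} := by
      have h1 : span Aᵐᵒᵖ {f * (c * y)} ≤ span Aᵐᵒᵖ {f} := by
        rw [Submodule.span_le, Set.singleton_subset_iff]; exact hwS
      have h2 : span Aᵐᵒᵖ {f * (c * y)} ≠ ⊥ := by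
        rw [Submodule.ne_bot_iff]
        exact ⟨_, Submodule.mem_span_singleton_self _, hw0⟩
      exact (hS.le_iff.mp h1).resolve_left h2
    obtain ⟨v, hv⟩ : ∃ v, (f * (c * y)) * v = f := by
      apply mem_span_right.mp
      rw [hspanw]
      exact Submodule.mem_span_singleton_self f
    have hwf : (f * (c * y)) * f = f * (c * y) := by
      rw [mul_assoc f (c * y), mul_assoc c y f, hyf]
    have hu : (f * (c * y)) * (f * v * f) = f := by
      rw [mul_assoc f v f, ← mul_assoc, hwf, ← mul_assoc, hv, hff]
    have hu0 : f * v * f ≠ 0 := fun h0 => hf0 (by rw [← hu, h0, mul_zero])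
    have huS : f * v * f ∈ span Aᵐᵒᵖ {f} := mem_span_right.mpr ⟨v * f, by rw [← mul_assoc]⟩
    have hspanu : span Aᵐᵒᵖ {f * v * f} = span Aᵐᵒᵖ {f} := by
      have h1 : span Aᵐᵒᵖ {f * v * f} ≤ span Aᵐᵒᵖ {f} := by
        rw [Submodule.span_le, Set.singleton_subset_iff]; exact huS
      have h2 : span Aᵐᵒᵖ {f * v * f} ≠ ⊥ := by
        rw [Submodule.ne_bot_iff]
        exact ⟨_, Submodule.mem_span_singleton_self _, hu0⟩
      exact (hS.le_iff.mp h1).resolve_left h2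
    obtain ⟨t, ht⟩ : ∃ t, (f * v * f) * t = f := by
      apply mem_span_right.mp
      rw [hspanu]
      exact Submodule.mem_span_singleton_self f
    have hwu : (f * v * f) * (f * (c * y)) = f := corner_trick_op hff hwf hv ht
    have hfAy : f ∈ span A {y} := by
      apply mem_span_left.mpr
      refine ⟨(f * v * f) * (f * c), ?_⟩
      have h2 := hwu
      simp only [← mul_assoc] at h2 ⊢
      exact h2
    have hle : span A {f} ≤ N := by
      rw [Submodule.span_le, Set.singleton_subset_iff]
      have hyN' : span A {y} ≤ N := by
        rw [Submodule.span_le, Set.singleton_subset_iff]; exact hyN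
      exact hyN' hfAy
    exact absurd hle (not_le_of_gt hN)

lemma atom_le_socle {I : Submodule A A} (h : IsAtom I) : I ≤ socle A := le_sSup h

lemma socle_mul_mem {x : A} (hx : x ∈ socle A) (r : A) : x * r ∈ socle A := by
  have hle : socle A ≤ comap (rmulHom r) (socle A) := by
    apply sSup_le
    intro I hI z hz
    show rmulHom r z ∈ socle A
    have himg : rmulHom r z ∈ map (rmulHom r) I := ⟨z, hz, rfl⟩
    rcases isAtom_map (rmulHom r) hI with hbot | hat
    · rw [hbot] at himg
      rw [Submodule.mem_bot] at himg
      rw [himg]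
      exact zero_mem _
    · exact atom_le_socle hat himg
  exact hle hx

end RingLemmas


section Main

variable {A : Type*} [Ring A]

lemma mem_rAnn {S : Set A} {x : A} : x ∈ rAnn S ↔ ∀ s ∈ S, s * x = 0 := Iff.rfl

lemma mem_lAnn {S : Set A} {x : A} : x ∈ lAnn S ↔ ∀ s ∈ S, x * s = 0 := Iff.rfl

/-- complement construction inside a finite sup of atoms. -/
lemma compl_exists :
    ∀ (l : List (Submodule A A)), (∀ I ∈ l, IsAtom I) →
    ∀ (L K : Submodule A A), L ⊓ K = ⊥ →
    ∃ K', K ≤ K' ∧ L ⊓ K' = ⊥ ∧ ∀ I ∈ l, I ≤ L ⊔ K' := by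
  intro l
  induction l with
  | nil =>
    intro _ L K h
    exact ⟨K, le_rfl, h, by simp⟩
  | cons a l ih =>
    intro hl L K h
    obtain ⟨K', hKK', hdisj, hall⟩ := ih (fun I hI => hl I (List.mem_cons_of_mem _ hI)) L K h
    by_cases hcase : a ≤ L ⊔ K'
    · refine ⟨K', hKK', hdisj, ?_⟩
      intro I hI
      rcases List.mem_cons.mp hI with rfl | hI
      · exact hcase
      · exact hall I hI
    · have hatom := hl a (List.mem_cons_self)
      have h1 : a ⊓ (L ⊔ K') = ⊥ := by
        rcases hatom.le_iff.mp (inf_le_left : a ⊓ (L ⊔ K') ≤ a) with h' | h'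
        · exact h'
        · exfalso
          apply hcase
          rw [← h']
          exact inf_le_right
      have h2 : (K' ⊔ a) ⊓ (L ⊔ K') = K' := by
        rw [sup_inf_assoc_of_le a (le_sup_right : K' ≤ L ⊔ K'), h1, sup_bot_eq]
      refine ⟨K' ⊔ a, hKK'.trans le_sup_left, ?_, ?_⟩
      · calc L ⊓ (K' ⊔ a) = (L ⊓ (L ⊔ K')) ⊓ (K' ⊔ a) := by
              rw [inf_eq_left.mpr (le_sup_left : L ≤ L ⊔ K')]
          _ = L ⊓ ((L ⊔ K') ⊓ (K' ⊔ a)) := inf_assoc _ _ _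
          _ = L ⊓ ((K' ⊔ a) ⊓ (L ⊔ K')) := by rw [inf_comm (L ⊔ K')]
          _ = L ⊓ K' := by rw [h2]
          _ = ⊥ := hdisj
      · intro I hI
        rcases List.mem_cons.mp hI with rfl | hI
        · exact le_sup_right.trans (le_sup_right : K' ⊔ I ≤ L ⊔ (K' ⊔ I))
        · exact (hall I hI).trans (sup_le_sup_left le_sup_left _)

/-- the right ideal generated by an element of a minimal left ideal is `⊥` or minimal. -/
lemma range_lmul_atom (hA : IsSemiprimeRing A) {I : Submodule A A} (hI : IsAtom I) {x : A}
    (hx : x ∈ I) :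
    LinearMap.range (lmulHom x) = ⊥ ∨ IsAtom (LinearMap.range (lmulHom x)) := by
  obtain ⟨e, hee, he0, hIe⟩ := atom_left_idem hA hI
  rw [hIe] at hx
  obtain ⟨a, ha⟩ := mem_span_left.mp hx
  have hre : LinearMap.range (lmulHom e) = span Aᵐᵒᵖ {e} := by
    ext z
    rw [LinearMap.mem_range, mem_span_right]
    simp only [lmulHom_apply]
  have hcomp : LinearMap.range (lmulHom x) = map (lmulHom a) (span Aᵐᵒᵖ {e}) := by
    rw [← hre]
    ext z
    constructor
    · rintro ⟨y, rfl⟩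
      exact ⟨e * y, ⟨y, rfl⟩, by simp only [lmulHom_apply, ← mul_assoc, ha]⟩
    · rintro ⟨_, ⟨y, rfl⟩, rfl⟩
      exact ⟨y, by simp only [lmulHom_apply, ← mul_assoc, ha]⟩
  rw [hcomp]
  exact isAtom_map (lmulHom a) (isAtom_op_span hA hee he0 (hIe ▸ hI))

lemma foldr_decomp (hA : IsSemiprimeRing A) :
    ∀ (l : List (Submodule A A)), (∀ I ∈ l, IsAtom I) →
    ∀ s ∈ l.foldr (· ⊔ ·) ⊥,
    ∃ lV : List (Submodule Aᵐᵒᵖ A), (∀ V ∈ lV, V = ⊥ ∨ IsAtom V) ∧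
      LinearMap.range (lmulHom s) ≤ lV.foldr (· ⊔ ·) ⊥ := by
  intro l
  induction l with
  | nil =>
    intro _ s hs
    simp only [List.foldr_nil, Submodule.mem_bot] at hs
    refine ⟨[], by simp, ?_⟩
    rintro _ ⟨c, rfl⟩
    simp only [lmulHom_apply, hs, zero_mul, List.foldr_nil, Submodule.mem_bot]
  | cons I l ih =>
    intro hl s hs
    obtain ⟨x, hxI, y, hy, hxy⟩ := mem_sup.mp hs
    obtain ⟨lV, hlV, hle⟩ := ih (fun J hJ => hl J (List.mem_cons_of_mem _ hJ)) y hy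
    refine ⟨LinearMap.range (lmulHom x) :: lV, ?_, ?_⟩
    · intro V hV
      rcases List.mem_cons.mp hV with rfl | hV
      · exact range_lmul_atom hA (hl I (List.mem_cons_self)) hxI
      · exact hlV V hV
    · rintro _ ⟨c, rfl⟩
      have hsc : lmulHom s c = x * c + y * c := by
        rw [lmulHom_apply, ← hxy, add_mul]
      rw [hsc, List.foldr_cons]
      exact add_mem (mem_sup_left ⟨c, rfl⟩) (mem_sup_right (hle ⟨c, rfl⟩))

theorem forward_dir (hA : IsSemiprimeRing A) (L : Submodule A A) {s : A} (hs : s ∈ socle A)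
    (h1s : 1 - s ∈ L) :
    L = lAnn (rAnn (L : Set A) : Set A) ∧ mlen Aᵐᵒᵖ (rAnn (L : Set A)) ≠ ⊤ := by
  have hcpt := Submodule.singleton_span_isCompactElement s (R := A)
  have hles : span A {s} ≤ sSup {m : Submodule A A | IsAtom m} := by
    rw [Submodule.span_le, Set.singleton_subset_iff]
    exact hs
  obtain ⟨F, hF, hsF⟩ := (CompleteLattice.isCompactElement_iff_exists_le_sSup_of_le_sSup _ _).mp hcpt {m | IsAtom m} hles
  have hsmem : s ∈ F.sup id := hsF (Submodule.mem_span_singleton_self s)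
  have hlatom : ∀ I ∈ F.toList, IsAtom I := fun I hI => hF (Finset.mem_toList.mp hI)
  have hfold : F.sup id = F.toList.foldr (· ⊔ ·) ⊥ := by
    apply le_antisymm
    · exact Finset.sup_le fun a ha => le_foldr_of_mem (Finset.mem_toList.mpr ha)
    · exact foldr_le fun a ha => Finset.le_sup (f := id) (Finset.mem_toList.mp ha)
  have hsfold : s ∈ F.toList.foldr (· ⊔ ·) ⊥ := hfold ▸ hsmem
  constructor
  · obtain ⟨K', _, hdisj, hall⟩ := compl_exists F.toList hlatom L ⊥ (by simp)
    have h1mem : (1 : A) ∈ L ⊔ K' := by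
      have h1 : (1 : A) = (1 - s) + s := (sub_add_cancel 1 s).symm
      rw [h1]
      exact add_mem (mem_sup_left h1s) ((foldr_le fun I hI => hall I hI) hsfold)
    obtain ⟨l₀, hl₀, r, hr, hlr⟩ := mem_sup.mp h1mem
    have hrAnn : r ∈ rAnn (L : Set A) := by
      rw [mem_rAnn]
      intro x hx
      have hx' : x ∈ L := hx
      have hxl₀ : x * l₀ ∈ L := smul_mem L x hl₀
      have hxr1 : x * r = x - x * l₀ := by
        have h2 : x * l₀ + x * r = x := by rw [← mul_add, hlr, mul_one]
        rw [eq_sub_iff_add_eq, add_comm]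
        exact h2
      have hmemL : x * r ∈ L := by
        rw [hxr1]
        exact sub_mem hx' hxl₀
      have hmemK : x * r ∈ K' := smul_mem K' x hr
      have hb : x * r ∈ L ⊓ K' := ⟨hmemL, hmemK⟩
      rw [hdisj] at hb
      exact hb
    apply le_antisymm
    · intro x hx
      rw [mem_lAnn]
      intro t ht
      exact (mem_rAnn.mp ht) x hx
    · intro z hz
      have hzr : z * r = 0 := (mem_lAnn.mp hz) r hrAnn
      have hz1 : z = z * l₀ + z * r := by rw [← mul_add, hlr, mul_one]
      rw [hz1, hzr, add_zero]
      exact smul_mem L z hl₀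
  · obtain ⟨lV, hlV, hrange⟩ := foldr_decomp hA F.toList hlatom s hsfold
    have hRle : rAnn (L : Set A) ≤ LinearMap.range (lmulHom s) := by
      intro x hx
      have h0 : (1 - s) * x = 0 := (mem_rAnn.mp hx) (1 - s) h1s
      rw [sub_mul, one_mul, sub_eq_zero] at h0
      exact ⟨x, h0.symm⟩
    exact mlen_ne_top_of_chainsLE
      (chainsLE_mono (hRle.trans hrange) (chain_bound lV hlV))

lemma lemR (hA : IsSemiprimeRing A) :
    ∀ (n : ℕ) (R : Submodule Aᵐᵒᵖ A), ChainsLE R n →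
    ∃ e : A, e * e = e ∧ e ∈ socle A ∧ R = span Aᵐᵒᵖ {e} := by
  intro n
  induction n with
  | zero =>
    intro R hb
    have hR : R = ⊥ := by
      by_contra hR
      have h1 := hb 1 (fun i => if i = 0 then ⊥ else R) ?_ ?_
      · omega
      · intro i hi
        have hi0 : i = 0 := by omega
        simp only [hi0, if_pos rfl, if_neg (by omega : ¬ (0 + 1 = 0))]
        exact bot_lt_iff_ne_bot.mpr hR
      · intro i _
        by_cases h : i = 0 <;> simp [h]
    exact ⟨0, by rw [mul_zero], zero_mem _, by rw [hR, Submodule.span_zero_singleton]⟩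
  | succ n ih =>
    intro R hb
    by_cases hR : R = ⊥
    · exact ⟨0, by rw [mul_zero], zero_mem _, by rw [hR, Submodule.span_zero_singleton]⟩
    obtain ⟨S, hS, hSR⟩ := exists_atom_le_of_chainsLE (n + 1) R hb hR
    obtain ⟨f, hff, hf0, hSf⟩ := atom_right_idem hA hS
    have hfR : f ∈ R := hSR (hSf ▸ Submodule.mem_span_singleton_self f)
    set π : A →ₗ[Aᵐᵒᵖ] A := LinearMap.id - lmulHom f with hπdef
    have hπ_apply : ∀ x : A, π x = x - f * x := fun x => rfl
    have hkill : ∀ y ∈ map π R, f * y = 0 := by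
      rintro _ ⟨x, _, rfl⟩
      rw [hπ_apply, mul_sub, ← mul_assoc, hff, sub_self]
    have hR'le : map π R ≤ R := by
      rintro _ ⟨x, hx, rfl⟩
      rw [hπ_apply]
      exact sub_mem hx (mul_mem_right' x hfR)
    have hR'lt : map π R < R := by
      refine lt_of_le_of_ne hR'le ?_
      intro heq
      have h0 : f * f = 0 := hkill f (by rw [heq]; exact hfR)
      rw [hff] at h0
      exact hf0 h0
    obtain ⟨g, hgg, hgsoc, hR'g⟩ := ih (map π R)
      (chainsLE_of_lt hR'lt hb)
    have hgR' : g ∈ map π R :=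
      hR'g ▸ Submodule.mem_span_singleton_self g
    have hfg : f * g = 0 := hkill g hgR'
    have hfh : f * (g - g * f) = 0 := by
      rw [mul_sub, hfg, ← mul_assoc, hfg, zero_mul, sub_self]
    have hhf : (g - g * f) * f = 0 := by rw [sub_mul, mul_assoc, hff, sub_self]
    have hhh : (g - g * f) * (g - g * f) = g - g * f := by
      have h1 : g * (g - g * f) = g - g * f := by rw [mul_sub, hgg, ← mul_assoc, hgg]
      calc (g - g * f) * (g - g * f) = g * (g - g * f) - g * f * (g - g * f) := sub_mul _ _ _
        _ = (g - g * f) - g * (f * (g - g * f)) := by rw [h1, mul_assoc]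
        _ = g - g * f := by rw [hfh, mul_zero, sub_zero]
    have hee : (f + (g - g * f)) * (f + (g - g * f)) = f + (g - g * f) := by
      rw [add_mul, mul_add, mul_add, hff, hfh, hhf, hhh, add_zero, zero_add]
    have hef : (f + (g - g * f)) * f = f := by rw [add_mul, hff, hhf, add_zero]
    have heg : (f + (g - g * f)) * g = g := by
      have hhg : (g - g * f) * g = g := by rw [sub_mul, hgg, mul_assoc, hfg, mul_zero, sub_zero]
      rw [add_mul, hfg, hhg, zero_add]
    refine ⟨f + (g - g * f), hee, ?_, ?_⟩
    · have hfat : IsAtom (span A {f}) := isAtom_span_of_op hA hff hf0 (hSf ▸ hS)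
      have hfsoc : f ∈ socle A := atom_le_socle hfat (Submodule.mem_span_singleton_self f)
      exact add_mem hfsoc (sub_mem hgsoc (socle_mul_mem hgsoc f))
    · apply le_antisymm
      · intro x hx
        have hx' : x = f * x + π x := by
          rw [hπ_apply]
          abel
        have h1 : f * x ∈ span Aᵐᵒᵖ {f + (g - g * f)} :=
          mem_span_right.mpr ⟨f * x, by rw [← mul_assoc, hef]⟩
        have h2 : π x ∈ span Aᵐᵒᵖ {f + (g - g * f)} := by
          have hmem : π x ∈ map π R :=
            ⟨x, hx, rfl⟩
          rw [hR'g] at hmem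
          obtain ⟨b, hb⟩ := mem_span_right.mp hmem
          exact mem_span_right.mpr ⟨g * b, by rw [← mul_assoc, heg, hb]⟩
        rw [hx']
        exact add_mem h1 h2
      · rw [Submodule.span_le, Set.singleton_subset_iff]
        have hgR : g ∈ R := hR'le hgR'
        exact add_mem hfR (sub_mem hgR (mul_mem_right' f hgR))

theorem backward_dir (hA : IsSemiprimeRing A) (L : Submodule A A)
    (hLA : L = lAnn (rAnn (L : Set A) : Set A)) (hfin : mlen Aᵐᵒᵖ (rAnn (L : Set A)) ≠ ⊤) :
    IsFredholmLeftIdeal L := by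
  obtain ⟨n, hb⟩ := exists_chainsLE_of_mlen_ne_top hfin
  obtain ⟨e, hee, hesoc, hRe⟩ := lemR hA n (rAnn (L : Set A)) hb
  have h1e : 1 - e ∈ L := by
    rw [hLA, mem_lAnn]
    intro t ht
    have ht' : t ∈ span Aᵐᵒᵖ {e} := hRe ▸ (ht : t ∈ rAnn (L : Set A))
    obtain ⟨b, hb'⟩ := mem_span_right.mp ht'
    rw [← hb', ← mul_assoc, sub_mul, one_mul, hee, sub_self, zero_mul]
  have hkey : (1 - e) * (1 - e) - 1 ∈ socle A := by
    have h2 : (1 - e) * (1 - e) - 1 = -e := by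
      rw [mul_sub, mul_one, sub_mul, one_mul, hee]
      abel
    rw [h2]
    exact neg_mem hesoc
  exact ⟨1 - e, h1e, 1 - e, hkey, hkey⟩

end Main

theorem stmt5 (A : Type*) [Ring A] (hA : IsSemiprimeRing A) (L : Submodule A A) :
    IsFredholmLeftIdeal L ↔
      L = lAnn (rAnn (L : Set A) : Set A) ∧ mlen Aᵐᵒᵖ (rAnn (L : Set A)) ≠ ⊤ := by
  constructor
  · rintro ⟨a, haL, b, _, hba⟩
    have hs : 1 - b * a ∈ socle A := by
      have hneg := neg_mem hba
      rwa [neg_sub] at hneg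
    have h1s : 1 - (1 - b * a) ∈ L := by
      rw [sub_sub_cancel]
      exact smul_mem L b haL
    exact forward_dir hA L hs h1s
  · rintro ⟨hLA, hfin⟩
    exact backward_dir hA L hLA hfin
end

section
/- Let A be a unital ring and L ⊆ A a left ideal. The following are equivalent: (i) the left A-module A/L is semisimple; (ii) L is an intersection of maximal left ideals and A/L has finite length; (iii) L is a finite intersection of maximal left ideals. -/
open MulOpposite Submodule

section Aux

set_option maxHeartbeats 800000

variable {R M : Type*} [Ring R] [AddCommGroup M] [Module R M]

private theorem chainBound (h : IsFiniteLength R M) :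
    ∃ n : ℕ, ∀ p : LTSeries (Submodule R M), p.length ≤ n := by
  induction h with
  | of_subsingleton =>
    refine ⟨0, fun p => ?_⟩
    by_contra hp
    have h1 : 0 < p.length := by omega
    have : p.toFun (Fin.castSucc ⟨0, h1⟩) < p.toFun (Fin.succ ⟨0, h1⟩) := p.step ⟨0, h1⟩
    exact this.ne (Subsingleton.elim _ _)
  | @of_simple_quotient M _ _ N _ _ ih =>
    classical
    obtain ⟨n, hn⟩ := ih
    have hheight : ∀ x : Submodule R ↥N, Order.height x ≤ (n : ℕ∞) := fun x =>
      Order.height_le fun p _ => Nat.cast_le.mpr (hn p)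
    have hcoatom : IsCoatom N := isSimpleModule_iff_isCoatom.mp ‹_›
    have htwo : ∀ P : Submodule R M, N ≤ P → P = N ∨ P = ⊤ := by
      intro P hP
      rcases hP.lt_or_eq with h | h
      · exact Or.inr (hcoatom.2 _ h)
      · exact Or.inl h.symm
    set f : Submodule R M → ℕ∞ :=
      fun P => Order.height (comap N.subtype P) + (if P ≤ N then 0 else 1) with hf
    have key : ∀ (k : ℕ) (p : LTSeries (Submodule R M)), p.length = k → (k : ℕ∞) ≤ f p.last := by
      intro k
      induction k with
      | zero => intro p _; simp
      | succ k IH =>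
        intro p hp
        have h0 : p.length ≠ 0 := by omega
        have hlt : p.eraseLast.last < p.last := p.eraseLast_last_rel_last h0
        have hk := IH p.eraseLast (by simp [hp])
        set a := p.eraseLast.last
        set b := p.last
        have hmono : comap N.subtype a ≤ comap N.subtype b := comap_mono hlt.le
        have main : f a + 1 ≤ f b := by
          by_cases hsup : b ⊔ N ≤ a ⊔ N
          · have hinf : a ⊓ N < b ⊓ N := inf_lt_inf_of_lt_of_sup_le_sup hlt hsup
            have hstrict : comap N.subtype a < comap N.subtype b := by
              refine lt_of_le_of_ne hmono fun hEq => hinf.ne ?_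
              have := congrArg (Submodule.map N.subtype) hEq
              rw [Submodule.map_comap_subtype, Submodule.map_comap_subtype] at this
              rw [inf_comm, this, inf_comm]
            have hfin : Order.height (comap N.subtype a) ≠ ⊤ :=
              fun hEq => by simpa [hEq] using hheight (comap N.subtype a)
            have hh : Order.height (comap N.subtype a) + 1 ≤ Order.height (comap N.subtype b) :=
              Order.add_one_le_of_lt (Order.height_strictMono hstrict (lt_top_iff_ne_top.mpr hfin))
            have hind : (if a ≤ N then (0:ℕ∞) else 1) ≤ (if b ≤ N then 0 else 1) := by
              split_ifs with h1 h2
              · exact le_rfl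
              · exact zero_le_one
              · exact absurd (hlt.le.trans ‹b ≤ N›) h1
              · exact le_rfl
            rw [hf]
            calc Order.height (comap N.subtype a) + (if a ≤ N then (0:ℕ∞) else 1) + 1
                = Order.height (comap N.subtype a) + 1 + (if a ≤ N then (0:ℕ∞) else 1) := by
                  rw [add_right_comm]
              _ ≤ Order.height (comap N.subtype b) + (if b ≤ N then (0:ℕ∞) else 1) :=
                  add_le_add hh hind
          · have haN : a ≤ N := by
              rcases htwo (a ⊔ N) le_sup_right with h | h
              · exact le_sup_left.trans h.le
              · exact absurd (le_top.trans h.ge) hsup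
            have hbN : ¬ b ≤ N := fun h => by
              have hbn : b ⊔ N = N := sup_eq_right.mpr h
              exact hsup (hbn.le.trans le_sup_right)
            have : f a + 1 ≤ f b := by
              rw [hf]; simp only [if_pos haN, if_neg hbN, add_zero]
              exact add_le_add_left (Order.height_mono hmono) 1
            exact this
        have : ((k : ℕ) + 1 : ℕ∞) ≤ f b := le_trans (add_le_add_left hk 1) main
        exact_mod_cast this
    refine ⟨n + 2, fun p => ?_⟩
    have h1 := key p.length p rfl
    have h2 : f p.last ≤ (n : ℕ∞) + 1 := by
      rw [hf]
      refine add_le_add (hheight _) ?_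
      split_ifs <;> simp
    have h3 : (p.length : ℕ∞) ≤ ((n + 1 : ℕ) : ℕ∞) := by
      push_cast
      exact h1.trans h2
    have : p.length ≤ n + 1 := by exact_mod_cast h3
    omega

private theorem mlen_ne_top_of_isFiniteLength (h : IsFiniteLength R M) : mlen R M ≠ ⊤ := by
  obtain ⟨n, hn⟩ := chainBound h
  have hk : Order.krullDim (Submodule R M) ≤ ((n : ℕ∞) : WithBot ℕ∞) := by
    rw [Order.krullDim_eq_iSup_length]
    exact WithBot.coe_le_coe.mpr (iSup_le fun p => Nat.cast_le.mpr (hn p))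
  intro hc
  cases hkd : Order.krullDim (Submodule R M) with
  | bot => rw [mlen, hkd] at hc; simp at hc
  | coe x =>
    rw [mlen, hkd] at hc
    rw [hkd] at hk
    have hx : x ≤ (n : ℕ∞) := WithBot.coe_le_coe.mp hk
    rw [WithBot.unbotD_coe] at hc
    rw [hc] at hx
    exact absurd hx (by simp)

private theorem exists_bound_of_mlen_ne_top (h : mlen R M ≠ ⊤) :
    ∃ n : ℕ, ∀ p : LTSeries (Submodule R M), p.length ≤ n := by
  cases hkd : Order.krullDim (Submodule R M) with
  | bot =>
    have h0 := Order.krullDim_nonneg (α := Submodule R M)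
    rw [hkd] at h0
    exact absurd h0 (by simp)
  | coe x =>
    have hx : x ≠ ⊤ := by
      rw [mlen, hkd, WithBot.unbotD_coe] at h
      exact h
    lift x to ℕ using hx with n
    refine ⟨n, fun p => ?_⟩
    have hb := Order.LTSeries.length_le_krullDim p
    rw [hkd] at hb
    exact_mod_cast hb

private theorem wf_of_bound (n : ℕ) (hn : ∀ p : LTSeries (Submodule R M), p.length ≤ n) :
    WellFounded ((· < ·) : Submodule R M → Submodule R M → Prop) := by
  rw [RelEmbedding.wellFounded_iff_isEmpty]
  constructor
  intro f
  have key : ∀ i j : ℕ, i < j → f j < f i := fun i j h => f.map_rel_iff.mpr h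
  have hstep : ∀ i : Fin (n + 1),
      f (n + 1 - (i.castSucc : ℕ)) < f (n + 1 - (i.succ : ℕ)) := by
    intro i
    have hi := i.isLt
    have h1 : (i.castSucc : ℕ) = (i : ℕ) := rfl
    have h2 : (i.succ : ℕ) = (i : ℕ) + 1 := rfl
    exact key _ _ (by omega)
  set p : LTSeries (Submodule R M) :=
    ⟨n + 1, fun i => f (n + 1 - (i : ℕ)), hstep⟩ with hpdef
  have hle := hn p
  have hl : p.length = n + 1 := rfl
  omega

private theorem isCoatom_comap_mkQ (p : Submodule R M) (c : Submodule R (M ⧸ p))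
    (hc : IsCoatom c) : IsCoatom (comap p.mkQ c) := by
  constructor
  · intro h
    apply hc.1
    have := congrArg (Submodule.map p.mkQ) h
    rwa [Submodule.map_comap_eq_of_surjective (Submodule.mkQ_surjective p), Submodule.map_top,
      Submodule.range_mkQ] at this
  · intro b hb
    have hLb : p ≤ b := (Submodule.le_comap_mkQ p c).trans hb.le
    have h1 : c ≤ Submodule.map p.mkQ b := by
      have := Submodule.map_mono (f := p.mkQ) hb.le
      rwa [Submodule.map_comap_eq_of_surjective (Submodule.mkQ_surjective p)] at this
    rcases h1.lt_or_eq with h2 | h2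
    · have h3 : Submodule.map p.mkQ b = ⊤ := hc.2 _ h2
      have h4 := congrArg (comap p.mkQ) h3
      rwa [Submodule.comap_map_mkQ, sup_eq_right.mpr hLb, Submodule.comap_top] at h4
    · exfalso
      have h5 : b ≤ comap p.mkQ (Submodule.map p.mkQ b) := by
        rw [Submodule.comap_map_mkQ]
        exact le_sup_right
      rw [← h2] at h5
      exact hb.not_ge h5

private theorem sInf_coatoms_eq_bot (R M : Type*) [Ring R] [AddCommGroup M] [Module R M]
    [IsSemisimpleModule R M] : sInf {c : Submodule R M | IsCoatom c} = ⊥ := by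
  rcases IsSemisimpleModule.eq_bot_or_exists_simple_le
      (sInf {c : Submodule R M | IsCoatom c}) with h | ⟨a, haR, hs⟩
  · exact h
  · have hatom : IsAtom a := isSimpleModule_iff_isAtom.mp hs
    obtain ⟨c, hc⟩ := exists_isCompl a
    have hcoatom : IsCoatom c := hc.symm.isCoatom_iff_isAtom.mpr hatom
    have hac : a ≤ c := haR.trans (sInf_le hcoatom)
    exact absurd (hc.disjoint.eq_bot_of_le hac) hatom.1

end Aux

set_option maxHeartbeats 1000000 in
theorem stmt7 (A : Type*) [Ring A] (L : Submodule A A) :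
    List.TFAE [
      IsSemisimpleModule A (A ⧸ L),
      (∃ S : Set (Submodule A A), (∀ m ∈ S, IsCoatom m) ∧ L = sInf S) ∧ mlen A (A ⧸ L) ≠ ⊤,
      ∃ n : ℕ, ∃ m : Fin n → Submodule A A, (∀ i, IsCoatom (m i)) ∧ L = ⨅ i, m i] := by
  classical
  tfae_have 1 → 2 := by
    intro hss
    haveI := hss
    constructor
    · refine ⟨{m : Submodule A A | IsCoatom m ∧ L ≤ m}, fun m hm => hm.1, ?_⟩
      refine le_antisymm (le_sInf fun m hm => hm.2) ?_
      have hbot : sInf {c : Submodule A (A ⧸ L) | IsCoatom c} = ⊥ := sInf_coatoms_eq_bot A (A ⧸ L)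
      intro x hx
      have hxq : L.mkQ x ∈ (⊥ : Submodule A (A ⧸ L)) := by
        rw [← hbot]
        refine Submodule.mem_sInf.mpr fun c hc => ?_
        have hmem : sInf {m : Submodule A A | IsCoatom m ∧ L ≤ m} ≤ comap L.mkQ c :=
          sInf_le ⟨isCoatom_comap_mkQ L c hc, Submodule.le_comap_mkQ L c⟩
        exact hmem hx
      simpa [Submodule.mkQ_apply, Submodule.Quotient.mk_eq_zero] using hxq
    · have hfin : IsFiniteLength A (A ⧸ L) :=
        isFiniteLength_iff_isNoetherian_isArtinian.mpr ⟨inferInstance, inferInstance⟩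
      exact mlen_ne_top_of_isFiniteLength hfin
  tfae_have 2 → 3 := by
    rintro ⟨⟨S, hS, hL⟩, hlen⟩
    obtain ⟨n, hn⟩ := exists_bound_of_mlen_ne_top hlen
    have wf := wf_of_bound n hn
    set D : Set (Submodule A A) := {x | ∃ t : Finset (Submodule A A), ↑t ⊆ S ∧ x = t.inf id}
      with hD
    have hDne : (Submodule.map L.mkQ '' D).Nonempty :=
      ⟨Submodule.map L.mkQ ⊤, ⊤, ⟨∅, by simp⟩, rfl⟩
    obtain ⟨y, ⟨x₀, hx₀D, rfl⟩, hmin⟩ := wf.has_min _ hDne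
    have hLD : ∀ x ∈ D, L ≤ x := by
      rintro x ⟨t, ht, rfl⟩
      exact Finset.le_inf fun m hm => hL ▸ sInf_le (ht hm)
    have hstrict : ∀ x₁ ∈ D, ¬ x₁ < x₀ := by
      intro x₁ hx₁ hlt
      refine hmin (Submodule.map L.mkQ x₁) ⟨x₁, hx₁, rfl⟩ ?_
      refine lt_of_le_of_ne (Submodule.map_mono hlt.le) fun hEq => ?_
      have h1 := congrArg (comap L.mkQ) hEq
      rw [Submodule.comap_map_mkQ, Submodule.comap_map_mkQ,
        sup_eq_right.mpr (hLD _ hx₁), sup_eq_right.mpr (hLD _ hx₀D)] at h1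
      exact hlt.ne h1
    obtain ⟨t, ht, rfl⟩ := hx₀D
    have htD : t.inf id ∈ D := ⟨t, ht, rfl⟩
    have hx₀le : ∀ m ∈ S, t.inf id ≤ m := by
      intro m hm
      by_contra hno
      refine hstrict (t.inf id ⊓ m) ⟨insert m t, ?_, ?_⟩ (inf_lt_left.mpr hno)
      · rw [Finset.coe_insert]
        exact Set.insert_subset hm ht
      · rw [Finset.inf_insert]
        simp [inf_comm]
    have hx₀L : t.inf id = L := le_antisymm (hL ▸ le_sInf hx₀le) (hLD _ htD)
    refine ⟨t.card, fun i => ((t.equivFin.symm i : t) : Submodule A A),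
      fun i => hS _ (ht (t.equivFin.symm i).2), ?_⟩
    rw [← hx₀L]
    refine le_antisymm (le_iInf fun i => Finset.inf_le (t.equivFin.symm i).2)
      (Finset.le_inf fun b hb => ?_)
    have h6 := iInf_le (fun i => ((t.equivFin.symm i : t) : Submodule A A)) (t.equivFin ⟨b, hb⟩)
    simpa using h6
  tfae_have 3 → 1 := by
    rintro ⟨n, m, hm, hL⟩
    haveI : ∀ i, IsSimpleModule A (A ⧸ m i) := fun i => isSimpleModule_iff_isCoatom.mpr (hm i)
    haveI hPi : IsSemisimpleModule A (∀ i, A ⧸ m i) := by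
      refine isSemisimpleModule_of_isSemisimpleModule_submodule'
        (p := fun i => LinearMap.range (LinearMap.single A (fun j => A ⧸ m j) i)) (fun i => ?_)
        (LinearMap.iSup_range_single A _)
      have hinj : Function.Injective (LinearMap.single A (fun j => A ⧸ m j) i) :=
        LinearMap.ker_eq_bot.mp (LinearMap.ker_single A _ i)
      exact IsSemisimpleModule.congr (LinearEquiv.ofInjective _ hinj).symm
    let f : A →ₗ[A] (∀ i, A ⧸ m i) := LinearMap.pi fun i => (m i).mkQ
    have hker : LinearMap.ker f = L := by
      rw [LinearMap.ker_pi, hL]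
      simp [Submodule.ker_mkQ]
    exact IsSemisimpleModule.congr (M := LinearMap.range f)
      ((Submodule.quotEquivOfEq L (LinearMap.ker f) hker.symm).trans f.quotKerEquivRange)
  tfae_finish
end
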